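/- arXiv:1605.00038 — 2 statements merged into one kernel-verified Lean document; each statement's English description precedes it below -/
import Mathlib

section
/- Let A be a unital C*-algebra, x = x* ∈ A, and Z ∈ M_k(A) a matrix satisfying Z·Z* = Z*·Z = (1 - x²)·I_k and (x·I_k)·Z = -Z·(x·I_k) (anticommutation). Then P = (1/2)·I_{2k} + (1/2)·[[x·I_k, Z],[Z*, x·I_k]] is a projection in M_{2k}(A). -/
open Matrix

/-- If `x = x*` and `Z ∈ M_k(A)` satisfies `ZZ* = Z*Z = (1-x²)I_k` and
`xI_k` anticommutes with `Z`, then `P = (1/2)I_{2k} + (1/2)[[xI_k, Z],[Z*, xI_k]]` is a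
projection in `M_{2k}(A)`. -/
theorem distinguished_projection_anticommuting
    {A : Type*} [CStarAlgebra A] {k : ℕ} (x : A) (Z : Matrix (Fin k) (Fin k) A)
    (hx : star x = x)
    (hZ1 : Z * Zᴴ = Matrix.scalar (Fin k) (1 - x ^ 2))
    (hZ2 : Zᴴ * Z = Matrix.scalar (Fin k) (1 - x ^ 2))
    (hanti : Matrix.scalar (Fin k) x * Z = -(Z * Matrix.scalar (Fin k) x)) :
    let P : Matrix (Fin k ⊕ Fin k) (Fin k ⊕ Fin k) A :=
      (2 : ℂ)⁻¹ • 1 +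
        (2 : ℂ)⁻¹ • Matrix.fromBlocks (Matrix.scalar (Fin k) x) Z
          Zᴴ (Matrix.scalar (Fin k) x)
    Pᴴ = P ∧ P * P = P := by
  intro P
  set X := Matrix.scalar (Fin k) x with hX
  have hXh : Xᴴ = X := by
    rw [hX]
    show (Matrix.diagonal _)ᴴ = _
    rw [Matrix.diagonal_conjTranspose]
    simp [hx, Pi.star_def]
  set M := Matrix.fromBlocks X Z Zᴴ X with hM
  have hMh : Mᴴ = M := by
    rw [hM, Matrix.fromBlocks_conjTranspose, hXh, Matrix.conjTranspose_conjTranspose]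
  have hanti' : Zᴴ * X = -(X * Zᴴ) := by
    have := congrArg Matrix.conjTranspose hanti
    simpa [Matrix.conjTranspose_mul, hXh] using this
  have hXX : X * X = Matrix.scalar (Fin k) (x ^ 2) := by
    rw [hX, ← _root_.map_mul, sq]
  have h11 : X * X + Z * Zᴴ = 1 := by
    rw [hXX, hZ1, ← map_add]; simp
  have h12 : X * Z + Z * X = 0 := by rw [hanti, neg_add_cancel]
  have h21 : Zᴴ * X + X * Zᴴ = 0 := by rw [hanti', neg_add_cancel]
  have h22 : Zᴴ * Z + X * X = 1 := by
    rw [hXX, hZ2, ← map_add]; simp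
  have hM2 : M * M = 1 := by
    rw [hM, Matrix.fromBlocks_multiply, h11, h12, h21, h22, Matrix.fromBlocks_one]
  have hPh : Pᴴ = P := by
    show ((2 : ℂ)⁻¹ • (1 : Matrix (Fin k ⊕ Fin k) (Fin k ⊕ Fin k) A) + (2 : ℂ)⁻¹ • M)ᴴ = _
    rw [Matrix.conjTranspose_add, Matrix.conjTranspose_smul, Matrix.conjTranspose_smul,
      Matrix.conjTranspose_one, hMh, show star ((2:ℂ)⁻¹) = (2:ℂ)⁻¹ by norm_num]
  refine ⟨hPh, ?_⟩
  show ((2 : ℂ)⁻¹ • 1 + (2 : ℂ)⁻¹ • M) * ((2 : ℂ)⁻¹ • 1 + (2 : ℂ)⁻¹ • M)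
      = (2 : ℂ)⁻¹ • 1 + (2 : ℂ)⁻¹ • M
  rw [add_mul, mul_add, mul_add]
  simp only [smul_mul_assoc, mul_smul_comm, one_mul, mul_one, hM2, smul_smul]
  module
end

section
/- Let A be a unital C*-algebra, B : [-1,1] → A a continuous function whose values are self-adjoint unitaries. Define B̃ on the open set {x + iy ∈ ℂ : x² + y² ≤ 1, y ≠ ±1} by B̃(x+iy) = √(1-y²)·B(x/√(1-y²)) + (i·y)·1. Then B̃ extends to a continuous function on the closed unit disk with B̃(±i) = ±i·1, and every value of B̃ on the closed disk is unitary. -/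
/-- A continuous path `B` of self-adjoint unitaries over `[-1,1]` gives rise
to a continuous unitary-valued function `B̃` on the closed unit disk, defined by
`B̃(x+iy) = √(1-y²)·B(x/√(1-y²)) + iy·1` away from `±i`, with `B̃(±i) = ±i·1`. -/
theorem disk_extension_of_selfadjoint_unitary_path
    {A : Type*} [CStarAlgebra A] (B : ℝ → A) (hB : Continuous B)
    (hBsa : ∀ t ∈ Set.Icc (-1 : ℝ) 1, star (B t) = B t)
    (hBu : ∀ t ∈ Set.Icc (-1 : ℝ) 1, (B t) ^ 2 = 1) :
    ∃ F : ℂ → A,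
      ContinuousOn F (Metric.closedBall (0 : ℂ) 1) ∧
      (∀ z ∈ Metric.closedBall (0 : ℂ) 1, z.im ^ 2 ≠ 1 →
        F z = (Real.sqrt (1 - z.im ^ 2) : ℂ) • B (z.re / Real.sqrt (1 - z.im ^ 2)) +
          ((z.im : ℂ) * Complex.I) • (1 : A)) ∧
      F Complex.I = Complex.I • (1 : A) ∧
      F (-Complex.I) = -(Complex.I • (1 : A)) ∧
      (∀ z ∈ Metric.closedBall (0 : ℂ) 1,
        F z * star (F z) = 1 ∧ star (F z) * F z = 1) := by
  classical
  -- a bound for B on [-1,1]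
  obtain ⟨M, hM⟩ := isCompact_Icc.exists_bound_of_continuousOn
    (s := Set.Icc (-1 : ℝ) 1) hB.continuousOn
  -- membership facts
  have hball : ∀ z : ℂ, z ∈ Metric.closedBall (0 : ℂ) 1 →
      z.re ^ 2 + z.im ^ 2 ≤ 1 := by
    intro z hz
    have h : ‖z‖ ≤ 1 := by simpa using Metric.mem_closedBall.mp hz
    have h2 : ‖z‖ ^ 2 ≤ 1 := by nlinarith [norm_nonneg z]
    calc z.re ^ 2 + z.im ^ 2 = Complex.normSq z := by
          rw [Complex.normSq_apply]; ring
      _ = ‖z‖ ^ 2 := by rw [← Complex.sq_norm]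
      _ ≤ 1 := h2
  have him : ∀ z : ℂ, z ∈ Metric.closedBall (0 : ℂ) 1 → z.im ^ 2 ≤ 1 := by
    intro z hz
    nlinarith [hball z hz, sq_nonneg z.re]
  have harg : ∀ z : ℂ, z ∈ Metric.closedBall (0 : ℂ) 1 →
      z.re / Real.sqrt (1 - z.im ^ 2) ∈ Set.Icc (-1 : ℝ) 1 := by
    intro z hz
    rcases eq_or_ne (1 - z.im ^ 2) 0 with h0 | h0
    · simp [h0]
    · have hpos : 0 < 1 - z.im ^ 2 := lt_of_le_of_ne (by linarith [him z hz]) (Ne.symm h0)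
      have hs : 0 < Real.sqrt (1 - z.im ^ 2) := Real.sqrt_pos.mpr hpos
      have hre : |z.re| ≤ Real.sqrt (1 - z.im ^ 2) := by
        rw [← Real.sqrt_sq_eq_abs]
        exact Real.sqrt_le_sqrt (by nlinarith [hball z hz])
      rw [Set.mem_Icc, ← abs_le, abs_div, abs_of_pos hs]
      exact div_le_one_of_le₀ hre hs.le
  set F : ℂ → A := fun z =>
    (Real.sqrt (1 - z.im ^ 2) : ℂ) • B (z.re / Real.sqrt (1 - z.im ^ 2)) +
      ((z.im : ℂ) * Complex.I) • (1 : A) with hFdef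
  refine ⟨F, ?_, fun z _ _ => rfl, ?_, ?_, ?_⟩
  · -- continuity
    intro z hz
    by_cases hy : z.im ^ 2 = 1
    · -- z = ±i : squeeze
      have hFz : F z = ((z.im : ℂ) * Complex.I) • (1 : A) := by
        simp [hFdef, hy]
      have key : Filter.Tendsto (fun w => F w - F z)
          (nhdsWithin z (Metric.closedBall (0 : ℂ) 1)) (nhds 0) := by
        apply squeeze_zero_norm'
          (a := fun w : ℂ => Real.sqrt (1 - w.im ^ 2) * M + |w.im - z.im| * ‖(1 : A)‖)
        · filter_upwards [self_mem_nhdsWithin] with w hw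
          have hw1 : F w - F z =
              (Real.sqrt (1 - w.im ^ 2) : ℂ) • B (w.re / Real.sqrt (1 - w.im ^ 2)) +
                (((w.im : ℂ) - z.im) * Complex.I) • (1 : A) := by
            rw [hFz]
            simp only [hFdef]
            rw [sub_mul, sub_smul]
            abel
          rw [hw1]
          refine (norm_add_le _ _).trans ?_
          gcongr
          · rw [norm_smul]
            have h1 : ‖((Real.sqrt (1 - w.im ^ 2) : ℝ) : ℂ)‖ = Real.sqrt (1 - w.im ^ 2) := by
              rw [Complex.norm_real, Real.norm_eq_abs,
                abs_of_nonneg (Real.sqrt_nonneg _)]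
            rw [h1]
            exact mul_le_mul_of_nonneg_left (hM _ (harg w hw)) (Real.sqrt_nonneg _)
          · rw [norm_smul, norm_mul, Complex.norm_I, mul_one]
            have h2 : ‖((w.im : ℂ) - (z.im : ℂ))‖ = |w.im - z.im| := by
              rw [← Complex.ofReal_sub, Complex.norm_real, Real.norm_eq_abs]
            rw [h2]
        · have hcont : Continuous (fun w : ℂ =>
              Real.sqrt (1 - w.im ^ 2) * M + |w.im - z.im| * ‖(1 : A)‖) := by
            fun_prop
          have h0 : Real.sqrt (1 - z.im ^ 2) * M + |z.im - z.im| * ‖(1 : A)‖ = 0 := by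
            simp [hy]
          rw [← h0]
          exact hcont.continuousWithinAt
      exact tendsto_sub_nhds_zero_iff.mp key
    · -- away from ±i : F is continuous at z
      have hpos : 0 < 1 - z.im ^ 2 :=
        lt_of_le_of_ne (by linarith [him z hz]) (sub_ne_zero.mpr (fun h => hy h.symm)).symm
      have hs : Real.sqrt (1 - z.im ^ 2) ≠ 0 := (Real.sqrt_pos.mpr hpos).ne'
      have hca : ContinuousAt F z := by
        apply ContinuousAt.add
        · apply ContinuousAt.smul
          · exact Complex.continuous_ofReal.continuousAt.comp <|
              (Real.continuous_sqrt.comp (by fun_prop)).continuousAt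
          · exact hB.continuousAt.comp <| ContinuousAt.div (by fun_prop)
              ((Real.continuous_sqrt.comp (by fun_prop)).continuousAt) hs
        · fun_prop
      exact hca.continuousWithinAt
  · simp [hFdef]
  · simp [hFdef]
  · -- unitarity
    intro z hz
    set y : ℝ := z.im with hydef
    set s : ℝ := Real.sqrt (1 - y ^ 2) with hsdef
    set t : ℝ := z.re / s with htdef
    have hs2 : s ^ 2 = 1 - y ^ 2 := Real.sq_sqrt (by linarith [him z hz])
    have ht : t ∈ Set.Icc (-1 : ℝ) 1 := harg z hz
    have hb2 : B t * B t = 1 := by rw [← sq]; exact hBu t ht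
    have hFz : F z = (s : ℂ) • B t + ((y : ℂ) * Complex.I) • (1 : A) := rfl
    have hstar : star (F z) = (s : ℂ) • B t - ((y : ℂ) * Complex.I) • (1 : A) := by
      rw [hFz, star_add, star_smul, star_smul, star_one, hBsa t ht, sub_eq_add_neg,
        ← neg_smul]
      congr 2
      · exact Complex.conj_ofReal s
      · simp [Complex.ext_iff]
    have hsc : ((s : ℂ)) ^ 2 - ((y : ℂ) * Complex.I) ^ 2 = 1 := by
      have h1 : ((s : ℂ)) ^ 2 = ((1 - y ^ 2 : ℝ) : ℂ) := by
        rw [← Complex.ofReal_pow, hs2]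
      rw [h1, mul_pow, Complex.I_sq]
      push_cast
      ring
    constructor
    · rw [hFz, hstar, mul_sub, add_mul, add_mul, smul_mul_smul_comm, smul_mul_smul_comm,
        smul_mul_smul_comm, smul_mul_smul_comm, hb2, one_mul, mul_one, mul_one]
      have : ((s : ℂ) * s) • (1 : A) + ((y : ℂ) * Complex.I * s) • B t -
          (((s : ℂ) * ((y : ℂ) * Complex.I)) • B t +
            ((y : ℂ) * Complex.I * ((y : ℂ) * Complex.I)) • (1 : A)) =
          (((s : ℂ)) ^ 2 - ((y : ℂ) * Complex.I) ^ 2) • (1 : A) := by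
        module
      rw [this, hsc, one_smul]
    · rw [hFz, hstar, sub_mul, mul_add, mul_add, smul_mul_smul_comm, smul_mul_smul_comm,
        smul_mul_smul_comm, smul_mul_smul_comm, hb2, one_mul, mul_one, mul_one]
      have : ((s : ℂ) * s) • (1 : A) + ((s : ℂ) * ((y : ℂ) * Complex.I)) • B t -
          (((y : ℂ) * Complex.I * s) • B t +
            ((y : ℂ) * Complex.I * ((y : ℂ) * Complex.I)) • (1 : A)) =
          (((s : ℂ)) ^ 2 - ((y : ℂ) * Complex.I) ^ 2) • (1 : A) := by
        module
      rw [this, hsc, one_smul]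
end
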